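/- Let (U_n)_{n≥0} be the VLMC defined by a probabilized infinite comb with q_{0^∞}(0) ≠ 1. Then (U_n) admits a stationary probability measure on L if and only if the numerical series ∑_{n≥0} c_n converges. -/

import Mathlib

open MeasureTheory
open ProbabilityTheory (Kernel IsMarkovKernel)
open scoped ENNReal

namespace VLMC

/-- Left-infinite sequences over the alphabet `{0,1}`; `s 0` is the rightmost
(most recent) letter, `s 1` the one before it, etc. -/
abbrev L : Type := ℕ → Bool

/-- Append the letter `b` on the right of the left-infinite sequence `s`. -/
def extend (b : Bool) (s : L) : L := fun n => match n with
  | 0 => b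
  | k + 1 => s k

/-- Sequences whose letters, read from the rightmost one leftwards, start with `u`. -/
def cylRev (u : List Bool) : Set L := {s | ∀ i < u.length, s i = u.getD i false}

/-- The cylinder `Lw` of left-infinite sequences admitting the finite word `w` as a suffix. -/
def cyl (w : List Bool) : Set L := cylRev w.reverse

/-- `π` is a stationary (invariant) probability measure for the kernel `κ`. -/
def IsStationary (κ : Kernel L L) (π : Measure L) : Prop :=
  ∀ B : Set L, MeasurableSet B → π B = ∫⁻ s, κ s B ∂π

/-- `cₙ = ∏_{k=0}^{n-1} q_{0ᵏ1}(0)` (with `c₀ = 1`), for the infinite comb. -/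
noncomputable def combC (q : ℕ → Bool → ℝ≥0∞) (n : ℕ) : ℝ≥0∞ :=
  ∏ k ∈ Finset.range n, q k false

/-- The left-infinite sequence `0^∞`. -/
def zeroSeq : L := fun _ => false

/-- `κ` is the transition kernel of the VLMC associated with the probabilized
infinite comb whose contexts are the words `0ⁿ1`, `n ≥ 0` (with probability
measures `q n` on the alphabet) and the infinite word `0^∞` (with probability
measure `qinf`) : from a state with context `0ⁿ1` (i.e. ending with `10ⁿ`),
a letter `α` is appended on the right with probability `q n α`, and from the
state `0^∞` with probability `qinf α`. -/
def IsCombKernel (q : ℕ → Bool → ℝ≥0∞) (qinf : Bool → ℝ≥0∞) (κ : Kernel L L) : Prop :=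
  (∀ (n : ℕ) (s : L), s ∈ cylRev (List.replicate n false ++ [true]) →
      κ s = q n false • Measure.dirac (extend false s)
          + q n true • Measure.dirac (extend true s)) ∧
  κ zeroSeq = qinf false • Measure.dirac (extend false zeroSeq)
            + qinf true • Measure.dirac (extend true zeroSeq)

/-! ### auxiliary -/

def pw (n : ℕ) : List Bool := List.replicate n false ++ [true]

def A (n : ℕ) : Set L := cylRev (pw n)

def shift (s : L) : L := fun i => s (i + 1)

lemma pw_succ (n : ℕ) : pw (n + 1) = false :: pw n := by
  simp [pw, List.replicate_succ]

lemma mem_cylRev_cons {s : L} {a : Bool} {v : List Bool} :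
    s ∈ cylRev (a :: v) ↔ s 0 = a ∧ shift s ∈ cylRev v := by
  constructor
  · intro h
    refine ⟨h 0 (Nat.succ_pos _), fun i hi => ?_⟩
    have := h (i + 1) (by simpa using Nat.succ_lt_succ hi)
    simpa [shift] using this
  · rintro ⟨h0, h⟩ i hi
    cases i with
    | zero => simpa using h0
    | succ k =>
      have := h k (by simpa using Nat.lt_of_succ_lt_succ hi)
      simpa [shift] using this

lemma shift_extend (b : Bool) (s : L) : shift (extend b s) = s := rfl

lemma extend_mem_cylRev_cons {b a : Bool} {s : L} {v : List Bool} :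
    extend b s ∈ cylRev (a :: v) ↔ b = a ∧ s ∈ cylRev v := by
  rw [mem_cylRev_cons, shift_extend]
  exact Iff.rfl

lemma mem_A {s : L} {n : ℕ} : s ∈ A n ↔ (∀ i < n, s i = false) ∧ s n = true := by
  induction n generalizing s with
  | zero =>
    simp only [A, pw, List.replicate_zero, List.nil_append]
    constructor
    · intro h
      exact ⟨fun i hi => absurd hi (Nat.not_lt_zero i), by simpa using h 0 Nat.one_pos⟩
    · rintro ⟨-, h⟩ i hi
      simp only [List.length_singleton] at hi
      have : i = 0 := by omega
      subst this
      simpa using h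
  | succ n ih =>
    show s ∈ cylRev (pw (n+1)) ↔ _
    rw [pw_succ, mem_cylRev_cons]
    rw [show cylRev (pw n) = A n from rfl, ih]
    constructor
    · rintro ⟨h0, h1, h2⟩
      refine ⟨fun i hi => ?_, h2⟩
      cases i with
      | zero => exact h0
      | succ k => exact h1 k (Nat.lt_of_succ_lt_succ hi)
    · rintro ⟨h1, h2⟩
      exact ⟨h1 0 (Nat.succ_pos _), fun i hi => h1 (i + 1) (Nat.succ_lt_succ hi), h2⟩

lemma measurableSet_cylRev (u : List Bool) : MeasurableSet (cylRev u) := by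
  have : cylRev u = ⋂ (i : ℕ), ⋂ (_ : i < u.length), (fun s : L => s i) ⁻¹' {u.getD i false} := by
    ext s; simp [cylRev, Set.mem_iInter]
  rw [this]
  exact MeasurableSet.iInter fun i => MeasurableSet.iInter fun hi =>
    (measurable_pi_apply i) (measurableSet_singleton _)

lemma measurableSet_A (n : ℕ) : MeasurableSet (A n) := measurableSet_cylRev _

lemma disjoint_A : Pairwise (Function.onFun Disjoint A) := by
  have key : ∀ n m, n < m → Disjoint (A n) (A m) := by
    intro n m hnm
    rw [Set.disjoint_left]
    intro s hsn hsm
    have h1 := (mem_A.1 hsn).2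
    have h2 := (mem_A.1 hsm).1 n hnm
    rw [h1] at h2; exact Bool.noConfusion h2
  intro n m hnm
  rcases lt_or_gt_of_ne hnm with h | h
  · exact key n m h
  · exact (key m n h).symm

lemma zeroSeq_notMem_A (n : ℕ) : zeroSeq ∉ A n := by
  intro h
  have := (mem_A.1 h).2
  simp [zeroSeq] at this

lemma compl_iUnion_A : (⋃ n, A n)ᶜ = {zeroSeq} := by
  ext s
  simp only [Set.mem_compl_iff, Set.mem_iUnion, not_exists, Set.mem_singleton_iff]
  constructor
  · intro h
    by_contra hs
    have hex : ∃ i, s i = true := by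
      by_contra hno
      push_neg at hno
      exact hs (funext fun i => by simpa [zeroSeq] using Bool.eq_false_iff.2 (hno i))
    classical
    have hfind := Nat.find_spec hex
    refine h (Nat.find hex) (mem_A.2 ⟨fun i hi => ?_, hfind⟩)
    have := Nat.find_min hex hi
    simpa using Bool.eq_false_iff.2 this
  · rintro rfl n h
    exact zeroSeq_notMem_A n h

lemma measurableSet_zeroSeq : MeasurableSet ({zeroSeq} : Set L) := by
  rw [← compl_iUnion_A]
  exact (MeasurableSet.iUnion measurableSet_A).compl

lemma union_A_cover : ({zeroSeq} : Set L) ∪ (⋃ n, A n) = Set.univ := by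
  rw [← compl_iUnion_A]
  exact Set.compl_union_self _


/-! ### leadFalse and W -/

def leadFalse : List Bool → ℕ
  | [] => 0
  | (true :: _) => 0
  | (false :: v) => leadFalse v + 1

section Arith

variable (q : ℕ → Bool → ℝ≥0∞)

noncomputable def T (m : ℕ) : ℝ≥0∞ := ∑' k, combC q (k + m)

noncomputable def W : List Bool → ℝ≥0∞
  | [] => 1
  | (a :: v) =>
      if true ∈ v then q (leadFalse v) a * W v
      else (if a then combC q v.length else T q (v.length + 1)) * (T q 0)⁻¹

variable {q}

lemma combC_zero : combC q 0 = 1 := by simp [combC]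

lemma combC_succ (n : ℕ) : combC q (n + 1) = combC q n * q n false := by
  simp [combC, Finset.prod_range_succ]

variable (hq : ∀ n, q n false + q n true = 1)
include hq

lemma q_le_one (n : ℕ) (b : Bool) : q n b ≤ 1 := by
  rw [← hq n]
  cases b
  · exact le_self_add
  · exact le_add_self

lemma q_ne_top (n : ℕ) (b : Bool) : q n b ≠ ∞ :=
  fun h => by simpa [h] using q_le_one hq n b

lemma combC_le_one (n : ℕ) : combC q n ≤ 1 := by
  induction n with
  | zero => simp [combC_zero]
  | succ n ih =>
    rw [combC_succ]
    exact mul_le_one' ih (q_le_one hq n false)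

lemma combC_ne_top (n : ℕ) : combC q n ≠ ∞ :=
  fun h => by simpa [h] using combC_le_one hq n

omit hq

lemma T_zero : T q 0 = ∑' n, combC q n := tsum_congr fun k => by rw [Nat.add_zero]

lemma T_succ (m : ℕ) : T q m = combC q m + T q (m + 1) := by
  have h := (Summable.sum_add_tsum_nat_add' (f := fun k => combC q (k + m)) (k := 1)
    ENNReal.summable).symm
  rw [T, h]
  congr 1
  · simp
  · exact tsum_congr fun k => by rw [show k + 1 + m = k + (m + 1) from by omega]

lemma one_le_S : 1 ≤ T q 0 := by
  rw [T]
  have h := ENNReal.le_tsum (f := fun k => combC q (k + 0)) 0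
  simpa [combC_zero] using h

lemma S_ne_zero : T q 0 ≠ 0 := by
  intro h; simpa [h] using one_le_S (q := q)

lemma T_le_S (m : ℕ) : T q m ≤ T q 0 := by
  rw [T_zero, T]
  have h := (Summable.sum_add_tsum_nat_add' (f := fun k => combC q k) (k := m) ENNReal.summable)
  calc ∑' k, combC q (k + m)
      ≤ (∑ i ∈ Finset.range m, combC q i) + ∑' k, combC q (k + m) := le_add_self
  _ = ∑' n, combC q n := h

variable (hS : T q 0 ≠ ∞)
include hS

lemma T_ne_top (m : ℕ) : T q m ≠ ∞ := fun h => hS (top_le_iff.1 (h ▸ T_le_S m))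

lemma combC_tendsto_zero : Filter.Tendsto (combC q) Filter.atTop (nhds 0) := by
  apply ENNReal.tendsto_atTop_zero_of_tsum_ne_top
  rw [← T_zero]; exact hS

include hq

lemma sum_qtrue_combC (m : ℕ) :
    ∑' k, q (k + m) true * combC q (k + m) = combC q m := by
  have hpart : ∀ N, (∑ k ∈ Finset.range N, q (k + m) true * combC q (k + m))
      + combC q (N + m) = combC q m := by
    intro N
    induction N with
    | zero => simp
    | succ N ih =>
      rw [Finset.sum_range_succ, add_assoc]
      rw [show N + 1 + m = (N + m) + 1 from by omega, combC_succ]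
      calc (∑ k ∈ Finset.range N, q (k + m) true * combC q (k + m))
          + (q (N + m) true * combC q (N + m) + combC q (N + m) * q (N + m) false)
          = (∑ k ∈ Finset.range N, q (k + m) true * combC q (k + m))
          + combC q (N + m) := by
            congr 1
            rw [mul_comm (combC q (N + m)) (q (N + m) false), ← add_mul, add_comm,
              hq (N + m), one_mul]
      _ = combC q m := ih
  have h1 : Filter.Tendsto
      (fun N => (∑ k ∈ Finset.range N, q (k + m) true * combC q (k + m)) + combC q (N + m))
      Filter.atTop (nhds ((∑' k, q (k + m) true * combC q (k + m)) + 0)) := by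
    exact (ENNReal.tendsto_nat_tsum _).add
      ((combC_tendsto_zero hS).comp (Filter.tendsto_add_atTop_nat m))
  have h2 : (fun N => (∑ k ∈ Finset.range N, q (k + m) true * combC q (k + m)) + combC q (N + m))
      = fun _ => combC q m := funext hpart
  rw [h2] at h1
  have h3 := tendsto_nhds_unique h1 tendsto_const_nhds
  rw [add_zero] at h3
  exact h3

omit hq hS in
lemma sum_qfalse_combC (m : ℕ) :
    ∑' k, q (k + m) false * combC q (k + m) = T q (m + 1) := by
  rw [T]
  refine tsum_congr fun k => ?_
  rw [show k + (m + 1) = (k + m) + 1 from by omega, combC_succ, mul_comm]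

end Arith


/-! ### leadFalse / word lemmas -/

section Words

lemma leadFalse_cons_false (v : List Bool) : leadFalse (false :: v) = leadFalse v + 1 := rfl
lemma leadFalse_cons_true (v : List Bool) : leadFalse (true :: v) = 0 := rfl

lemma leadFalse_append_of_mem {v : List Bool} (hv : true ∈ v) (w : List Bool) :
    leadFalse (v ++ w) = leadFalse v := by
  induction v with
  | nil => simp at hv
  | cons a v ih =>
    cases a with
    | true => rfl
    | false =>
      have : true ∈ v := by simpa using hv
      simp only [List.cons_append, leadFalse_cons_false, ih this]

lemma leadFalse_spec {v : List Bool} (hv : true ∈ v) :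
    leadFalse v < v.length ∧ v.getD (leadFalse v) false = true ∧
      ∀ i < leadFalse v, v.getD i false = false := by
  induction v with
  | nil => simp at hv
  | cons a v ih =>
    cases a with
    | true =>
      refine ⟨Nat.succ_pos _, rfl, fun i hi => absurd hi (by simp [leadFalse_cons_true])⟩
    | false =>
      have hv' : true ∈ v := by simpa using hv
      obtain ⟨h1, h2, h3⟩ := ih hv'
      refine ⟨by simpa [leadFalse_cons_false] using Nat.succ_lt_succ h1, by
        simpa [leadFalse_cons_false] using h2, fun i hi => ?_⟩
      cases i with
      | zero => rfl
      | succ k =>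
        rw [leadFalse_cons_false] at hi
        simpa using h3 k (Nat.lt_of_succ_lt_succ hi)

lemma allFalse_getD {v : List Bool} (hv : true ∉ v) (i : ℕ) : v.getD i false = false := by
  by_cases h : i < v.length
  · rw [List.getD_eq_getElem _ _ h]
    cases hvi : v[i] with
    | false => rfl
    | true => exact absurd (hvi ▸ List.getElem_mem h) hv
  · exact List.getD_eq_default _ _ (le_of_not_gt h)

lemma allFalse_eq_replicate {v : List Bool} (hv : true ∉ v) :
    v = List.replicate v.length false := by
  apply List.ext_getElem (by simp)
  intro i h1 h2
  have := allFalse_getD hv i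
  rw [List.getD_eq_getElem _ _ h1] at this
  simp [this]

lemma leadFalse_append_true {v : List Bool} (hv : true ∉ v) :
    leadFalse (v ++ [true]) = v.length := by
  induction v with
  | nil => rfl
  | cons a v ih =>
    cases a with
    | true => exact absurd (by simp) hv
    | false =>
      have hv' : true ∉ v := fun h => hv (by simp [h])
      simp only [List.cons_append, leadFalse_cons_false, ih hv', List.length_cons]

lemma mem_cylRev_of_allFalse {v : List Bool} (hv : true ∉ v) {s : L} :
    s ∈ cylRev v ↔ ∀ i < v.length, s i = false := by
  constructor
  · intro h i hi
    rw [h i hi]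
    exact allFalse_getD hv i
  · intro h i hi
    rw [h i hi, allFalse_getD hv i]

end Words

section Wlemmas

variable {q : ℕ → Bool → ℝ≥0∞}

lemma W_nil : W q [] = 1 := rfl

lemma W_cons_of_mem {v : List Bool} (hv : true ∈ v) (a : Bool) :
    W q (a :: v) = q (leadFalse v) a * W q v := by
  rw [W, if_pos hv]

lemma W_cons_of_allFalse {v : List Bool} (hv : ¬ true ∈ v) (a : Bool) :
    W q (a :: v) = (if a then combC q v.length else T q (v.length + 1)) * (T q 0)⁻¹ := by
  rw [W, if_neg hv]

lemma true_mem_pw (n : ℕ) : true ∈ pw n := by simp [pw]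

lemma leadFalse_pw (n : ℕ) : leadFalse (pw n) = n := by
  induction n with
  | zero => rfl
  | succ n ih => rw [pw_succ, leadFalse_cons_false, ih]

lemma W_pw (n : ℕ) : W q (pw n) = combC q n * (T q 0)⁻¹ := by
  induction n with
  | zero =>
    show W q (true :: []) = _
    rw [W_cons_of_allFalse (by simp)]
    simp [combC_zero]
  | succ n ih =>
    rw [pw_succ, W_cons_of_mem (true_mem_pw n), leadFalse_pw, ih, combC_succ]
    ring

variable (hq : ∀ n, q n false + q n true = 1) (hS : T q 0 ≠ ∞)
include hq hS

lemma W_ne_top (u : List Bool) : W q u ≠ ∞ := by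
  induction u with
  | nil => simp [W_nil]
  | cons a v ih =>
    by_cases hv : true ∈ v
    · rw [W_cons_of_mem hv]
      exact ENNReal.mul_ne_top (q_ne_top hq _ _) ih
    · rw [W_cons_of_allFalse hv]
      refine ENNReal.mul_ne_top ?_ (ENNReal.inv_ne_top.2 (S_ne_zero (q := q)))
      cases a
      · simpa using T_ne_top hS (v.length + 1)
      · simpa using combC_ne_top hq v.length

lemma W_add (u : List Bool) :
    W q u = W q (u ++ [false]) + W q (u ++ [true]) := by
  induction u with
  | nil =>
    rw [W_nil]
    rw [show ([] : List Bool) ++ [false] = false :: [] from rfl,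
      show ([] : List Bool) ++ [true] = true :: [] from rfl,
      W_cons_of_allFalse (by simp), W_cons_of_allFalse (by simp)]
    simp only [if_true, if_false, List.length_nil, combC_zero, Bool.false_eq_true]
    rw [← add_mul]
    rw [show T q (0 + 1) + 1 = T q 0 from by rw [add_comm, ← combC_zero (q := q), ← T_succ]]
    exact (ENNReal.mul_inv_cancel (S_ne_zero (q := q)) hS).symm
  | cons a v ih =>
    rw [show (a :: v) ++ [false] = a :: (v ++ [false]) from rfl,
      show (a :: v) ++ [true] = a :: (v ++ [true]) from rfl]
    by_cases hv : true ∈ v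
    · rw [W_cons_of_mem hv, W_cons_of_mem (by simp [hv]), W_cons_of_mem (by simp [hv]),
        leadFalse_append_of_mem hv, leadFalse_append_of_mem hv, ← mul_add, ← ih]
    · have hvf : ¬ true ∈ v ++ [false] := by simpa using hv
      have hvt : true ∈ v ++ [true] := by simp
      rw [W_cons_of_allFalse hv, W_cons_of_allFalse hvf, W_cons_of_mem hvt,
        leadFalse_append_true hv]
      have hWvt : W q (v ++ [true]) = combC q v.length * (T q 0)⁻¹ := by
        rw [show v ++ [true] = pw v.length from by
          rw [pw]; exact congrArg (· ++ [true]) (allFalse_eq_replicate hv), W_pw]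
      rw [hWvt]
      simp only [List.length_append, List.length_singleton]
      cases a
      · simp only [if_false, Bool.false_eq_true]
        rw [T_succ (v.length + 1), combC_succ]
        ring
      · simp only [if_true]
        rw [combC_succ]
        have hstep : combC q v.length * q v.length false * (T q 0)⁻¹
            + q v.length true * (combC q v.length * (T q 0)⁻¹)
            = combC q v.length * (q v.length false + q v.length true) * (T q 0)⁻¹ := by
          ring
        rw [hstep, hq, mul_one]

end Wlemmas


/-! ### set identities and the generated sigma-algebra -/

section Sets

lemma cylRev_inter_A_of_mem {v : List Bool} (hv : true ∈ v) (n : ℕ) :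
    cylRev v ∩ A n = if n = leadFalse v then cylRev v else ∅ := by
  obtain ⟨h1, h2, h3⟩ := leadFalse_spec hv
  split_ifs with hn
  · subst hn
    refine Set.inter_eq_self_of_subset_left fun s hs => mem_A.2 ⟨fun i hi => ?_, ?_⟩
    · rw [hs i (lt_trans hi h1)]
      exact h3 i hi
    · rw [hs (leadFalse v) h1]; exact h2
  · ext s
    simp only [Set.mem_inter_iff, Set.mem_empty_iff_false, iff_false, not_and]
    intro hsv hsA
    rcases lt_or_gt_of_ne hn with h | h
    · -- n < leadFalse v : s n = true from A n, but v forces false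
      have := (mem_A.1 hsA).2
      rw [hsv n (lt_trans h h1), h3 n h] at this
      exact Bool.noConfusion this
    · -- n > leadFalse v : s (leadFalse v) = false from A n, but v forces true
      have := (mem_A.1 hsA).1 (leadFalse v) h
      rw [hsv (leadFalse v) h1, h2] at this
      exact Bool.noConfusion this

lemma cylRev_inter_A_of_allFalse {v : List Bool} (hv : true ∉ v) (n : ℕ) :
    cylRev v ∩ A n = if v.length ≤ n then A n else ∅ := by
  split_ifs with hn
  · refine Set.inter_eq_self_of_subset_right fun s hs => ?_
    rw [mem_cylRev_of_allFalse hv]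
    intro i hi
    exact (mem_A.1 hs).1 i (lt_of_lt_of_le hi hn)
  · push_neg at hn
    ext s
    simp only [Set.mem_inter_iff, Set.mem_empty_iff_false, iff_false, not_and]
    intro hsv hsA
    have h1 := (mem_A.1 hsA).2
    have h2 := (mem_cylRev_of_allFalse hv).1 hsv n hn
    rw [h2] at h1
    exact Bool.noConfusion h1

/-- The collection of all cylinders. -/
def Ccyl : Set (Set L) := Set.range cylRev

lemma cylRev_nil : cylRev [] = Set.univ := by
  ext s; simp [cylRev]

lemma isPiSystem_Ccyl : IsPiSystem Ccyl := by
  rintro S ⟨u, rfl⟩ T' ⟨v, rfl⟩ hne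
  obtain ⟨s, hsu, hsv⟩ := hne
  have key : ∀ u v : List Bool, u.length ≤ v.length → s ∈ cylRev u → s ∈ cylRev v →
      cylRev v ⊆ cylRev u := by
    intro u v huv hu hv t ht i hi
    rw [ht i (lt_of_lt_of_le hi huv), ← hv i (lt_of_lt_of_le hi huv), hu i hi]
  rcases le_total u.length v.length with h | h
  · rw [Set.inter_eq_self_of_subset_right (key u v h hsu hsv)]
    exact ⟨v, rfl⟩
  · rw [Set.inter_eq_self_of_subset_left (key v u h hsv hsu)]
    exact ⟨u, rfl⟩

lemma coord_eq_biUnion (i : ℕ) (b : Bool) :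
    {s : L | s i = b} =
      ⋃ u ∈ {u : List Bool | u.length = i + 1 ∧ u.getD i false = b}, cylRev u := by
  ext s
  simp only [Set.mem_setOf_eq, Set.mem_iUnion, exists_prop]
  constructor
  · intro hb
    refine ⟨List.ofFn (fun j : Fin (i + 1) => s j), ⟨by simp, ?_⟩, ?_⟩
    · rw [List.getD_eq_getElem _ _ (by simp), List.getElem_ofFn]
      simpa using hb
    · intro k hk
      simp only [List.length_ofFn] at hk
      rw [List.getD_eq_getElem _ _ (by simpa using hk), List.getElem_ofFn]
  · rintro ⟨u, ⟨hlen, hgetD⟩, hs⟩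
    rw [← hgetD, hs i (by omega)]

lemma generateFrom_Ccyl :
    (inferInstance : MeasurableSpace L) = MeasurableSpace.generateFrom Ccyl := by
  apply le_antisymm
  · -- pi σ-algebra ≤ generated
    have hcoordset : ∀ (i : ℕ) (b : Bool),
        MeasurableSet[MeasurableSpace.generateFrom Ccyl] {s : L | s i = b} := by
      intro i b
      rw [coord_eq_biUnion i b]
      exact MeasurableSet.biUnion (Set.to_countable _)
        (fun u _ => MeasurableSpace.measurableSet_generateFrom ⟨u, rfl⟩)
    have hle : ∀ i : ℕ, (MeasurableSpace.comap (fun s : L => s i) inferInstance)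
        ≤ MeasurableSpace.generateFrom Ccyl := by
      rintro i s ⟨t, -, rfl⟩
      have hpre : (fun s : L => s i) ⁻¹' t = ⋃ b ∈ t, {s : L | s i = b} := by
        ext s; simp [eq_comm]
      rw [hpre]
      exact MeasurableSet.biUnion t.to_countable (fun b _ => hcoordset i b)
    exact iSup_le hle
  · exact MeasurableSpace.generateFrom_le (by rintro _ ⟨u, rfl⟩; exact measurableSet_cylRev u)

end Sets


section KernelInt

variable {q : ℕ → Bool → ℝ≥0∞} {qinf : Bool → ℝ≥0∞} {κ : Kernel L L}

lemma extend_false_zeroSeq : extend false zeroSeq = zeroSeq := by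
  funext i; cases i <;> rfl

lemma extend_true_ne_zeroSeq (s : L) : extend true s ≠ zeroSeq := by
  intro h
  have := congrFun h 0
  simp [extend, zeroSeq] at this

lemma extend_false_ne_zeroSeq_of_A {n : ℕ} {s : L} (hs : s ∈ A n) :
    extend false s ≠ zeroSeq := by
  intro h
  have := congrFun h (n + 1)
  simp only [extend, zeroSeq] at this
  rw [(mem_A.1 hs).2] at this
  exact Bool.noConfusion this

lemma kernel_apply_on_A (hκ : IsCombKernel q qinf κ) {n : ℕ} {s : L} (hs : s ∈ A n)
    {B : Set L} (hB : MeasurableSet B) :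
    κ s B = q n false * B.indicator 1 (extend false s)
          + q n true * B.indicator 1 (extend true s) := by
  rw [hκ.1 n s hs]
  rw [Measure.coe_add, Pi.add_apply, Measure.smul_apply, Measure.smul_apply,
    Measure.dirac_apply' _ hB, Measure.dirac_apply' _ hB, smul_eq_mul, smul_eq_mul]

lemma lintegral_kernel_cylRev_cons (hκ : IsCombKernel q qinf κ) (π : Measure L)
    (hz : π {zeroSeq} = 0) (a : Bool) (v : List Bool) :
    ∫⁻ s, κ s (cylRev (a :: v)) ∂π = ∑' n, q n a * π (cylRev v ∩ A n) := by
  have hBmeas := measurableSet_cylRev (a :: v)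
  rw [← lintegral_add_compl (fun s => κ s (cylRev (a :: v)))
    (MeasurableSet.iUnion measurableSet_A), compl_iUnion_A,
    setLIntegral_measure_zero _ _ hz, add_zero,
    lintegral_iUnion measurableSet_A disjoint_A]
  refine tsum_congr fun n => ?_
  have hpoint : ∀ s ∈ A n, κ s (cylRev (a :: v)) = q n a * (cylRev v).indicator 1 s := by
    intro s hs
    rw [kernel_apply_on_A hκ hs hBmeas]
    cases a <;> by_cases hsv : s ∈ cylRev v <;>
      simp [Set.indicator_apply, extend_mem_cylRev_cons, hsv]
  calc ∫⁻ s in A n, κ s (cylRev (a :: v)) ∂π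
      = ∫⁻ s in A n, q n a * (cylRev v).indicator 1 s ∂π :=
        setLIntegral_congr_fun (measurableSet_A n) hpoint
  _ = q n a * ∫⁻ s in A n, (cylRev v).indicator 1 s ∂π :=
        lintegral_const_mul _ (measurable_one.indicator (measurableSet_cylRev v))
  _ = q n a * π (cylRev v ∩ A n) := by
        rw [lintegral_indicator_one (measurableSet_cylRev v),
          Measure.restrict_apply (measurableSet_cylRev v)]

lemma lintegral_kernel_zeroSeq (hκ : IsCombKernel q qinf κ) (π : Measure L) :
    ∫⁻ s, κ s {zeroSeq} ∂π = π {zeroSeq} * qinf false := by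
  rw [← lintegral_add_compl (fun s => κ s ({zeroSeq} : Set L))
    (MeasurableSet.iUnion measurableSet_A), compl_iUnion_A]
  have h1 : ∫⁻ s in ⋃ n, A n, κ s ({zeroSeq} : Set L) ∂π = 0 := by
    rw [lintegral_iUnion measurableSet_A disjoint_A]
    have hzero : ∀ n, ∫⁻ s in A n, κ s ({zeroSeq} : Set L) ∂π = 0 := by
      intro n
      have hpoint : ∀ s ∈ A n, κ s ({zeroSeq} : Set L) = 0 := by
        intro s hs
        rw [kernel_apply_on_A hκ hs measurableSet_zeroSeq]
        rw [Set.indicator_of_notMem (by simpa using extend_false_ne_zeroSeq_of_A hs),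
          Set.indicator_of_notMem (by simpa using extend_true_ne_zeroSeq s)]
        simp
      rw [setLIntegral_congr_fun (measurableSet_A n) hpoint]
      simp
    exact (tsum_congr hzero).trans tsum_zero
  rw [h1, zero_add, Measure.restrict_singleton, lintegral_smul_measure,
    lintegral_dirac' _ (κ.measurable_coe measurableSet_zeroSeq)]
  have hval : κ zeroSeq ({zeroSeq} : Set L) = qinf false := by
    rw [hκ.2, Measure.coe_add, Pi.add_apply, Measure.smul_apply, Measure.smul_apply,
      Measure.dirac_apply' _ measurableSet_zeroSeq, Measure.dirac_apply' _ measurableSet_zeroSeq,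
      Set.indicator_of_mem (by simp [extend_false_zeroSeq]),
      Set.indicator_of_notMem (by simpa using extend_true_ne_zeroSeq zeroSeq)]
    simp
  rw [hval, smul_eq_mul]

lemma tsum_kernel_cyl {q : ℕ → Bool → ℝ≥0∞} (hq : ∀ n, q n false + q n true = 1)
    (hS : T q 0 ≠ ∞) (π : Measure L)
    (hcyl : ∀ u, π (cylRev u) = W q u) (a : Bool) (v : List Bool) :
    ∑' n, q n a * π (cylRev v ∩ A n) = W q (a :: v) := by
  by_cases hv : true ∈ v
  · rw [W_cons_of_mem hv]
    rw [tsum_eq_single (leadFalse v) (fun n hn => by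
      rw [cylRev_inter_A_of_mem hv, if_neg hn, measure_empty, mul_zero])]
    rw [cylRev_inter_A_of_mem hv, if_pos rfl, hcyl]
  · have hterm : ∀ n, q n a * π (cylRev v ∩ A n)
        = if v.length ≤ n then q n a * combC q n * (T q 0)⁻¹ else 0 := by
      intro n
      rw [cylRev_inter_A_of_allFalse hv]
      split_ifs with h
      · rw [show π (A n) = W q (pw n) from hcyl (pw n), W_pw, mul_assoc]
      · rw [measure_empty, mul_zero]
    rw [tsum_congr hterm]
    rw [← Summable.sum_add_tsum_nat_add'
      (f := fun n => if v.length ≤ n then q n a * combC q n * (T q 0)⁻¹ else 0)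
      (k := v.length) ENNReal.summable]
    rw [Finset.sum_eq_zero (fun i hi => if_neg (by
      simp only [Finset.mem_range] at hi; omega)), zero_add]
    have htail : ∀ k : ℕ, (if v.length ≤ k + v.length then
        q (k + v.length) a * combC q (k + v.length) * (T q 0)⁻¹ else 0)
        = (q (k + v.length) a * combC q (k + v.length)) * (T q 0)⁻¹ := by
      intro k
      rw [if_pos le_add_self]
    rw [tsum_congr htail, ENNReal.tsum_mul_right, W_cons_of_allFalse hv]
    cases a
    · rw [sum_qfalse_combC]; simp
    · rw [sum_qtrue_combC hq hS]; simp

end KernelInt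


/-! ### construction of the stationary measure via a quantile map -/

section Construction

variable (q : ℕ → Bool → ℝ≥0∞)

noncomputable def w (u : List Bool) : ℝ := (W q u).toReal

noncomputable def loAux : List Bool → ℝ
  | [] => 0
  | b :: r => loAux r + if b then w q (r.reverse ++ [false]) else 0

noncomputable def lo (u : List Bool) : ℝ := loAux q u.reverse

noncomputable def step (x : ℝ) (ul : List Bool × ℝ) : List Bool × ℝ :=
  if x < ul.2 + w q (ul.1 ++ [false]) then (ul.1 ++ [false], ul.2)
  else (ul.1 ++ [true], ul.2 + w q (ul.1 ++ [false]))

noncomputable def F (x : ℝ) : ℕ → List Bool × ℝ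
  | 0 => ([], 0)
  | n + 1 => step q x (F x n)

noncomputable def psi (x : ℝ) : L := fun i => (F q x (i + 1)).1.getD i false

variable {q}

lemma lo_nil : lo q [] = 0 := rfl

lemma lo_append_false (u : List Bool) : lo q (u ++ [false]) = lo q u := by
  show loAux q (u ++ [false]).reverse = loAux q u.reverse
  rw [List.reverse_append]
  show loAux q (false :: u.reverse) = _
  rw [loAux]
  simp

lemma lo_append_true (u : List Bool) :
    lo q (u ++ [true]) = lo q u + w q (u ++ [false]) := by
  show loAux q (u ++ [true]).reverse = loAux q u.reverse + w q (u ++ [false])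
  rw [List.reverse_append]
  show loAux q (true :: u.reverse) = _
  rw [loAux]
  simp

lemma w_nonneg (u : List Bool) : 0 ≤ w q u := ENNReal.toReal_nonneg

variable (hq : ∀ n, q n false + q n true = 1) (hS : T q 0 ≠ ∞)
include hq hS

omit hq hS in
lemma w_nil : w q [] = 1 := by simp [w, W_nil]

lemma w_add (u : List Bool) : w q u = w q (u ++ [false]) + w q (u ++ [true]) := by
  rw [w, w, w, ← ENNReal.toReal_add (W_ne_top hq hS _) (W_ne_top hq hS _), ← W_add hq hS]

omit hq hS

lemma F_zero (x : ℝ) : F q x 0 = ([], 0) := rfl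

lemma F_succ (x : ℝ) (n : ℕ) : F q x (n + 1) = step q x (F q x n) := rfl

lemma F_snd (x : ℝ) (n : ℕ) :
    (F q x n).2 = lo q (F q x n).1 ∧ (F q x n).1.length = n := by
  induction n with
  | zero => exact ⟨lo_nil.symm, rfl⟩
  | succ n ih =>
    rcases ih with ⟨ih1, ih2⟩
    rw [F_succ, step]
    split_ifs with h
    · exact ⟨by simpa [lo_append_false] using ih1, by simp [ih2]⟩
    · refine ⟨?_, by simp [ih2]⟩
      show (F q x n).2 + w q ((F q x n).1 ++ [false]) = lo q ((F q x n).1 ++ [true])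
      rw [lo_append_true, ih1]

lemma F_prefix (x : ℝ) {n m : ℕ} (h : n ≤ m) : (F q x n).1 <+: (F q x m).1 := by
  induction m with
  | zero =>
    have : n = 0 := Nat.le_zero.1 h
    subst this; exact List.prefix_refl _
  | succ m ih =>
    by_cases hnm : n = m + 1
    · subst hnm; exact List.prefix_refl _
    · have h' : n ≤ m := by omega
      refine (ih h').trans ?_
      rw [F_succ, step]
      split_ifs with hc
      · exact List.prefix_append _ _
      · exact List.prefix_append _ _

lemma IsPrefix.getD_eq {l₁ l₂ : List Bool} (h : l₁ <+: l₂) {i : ℕ} (hi : i < l₁.length) :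
    l₂.getD i false = l₁.getD i false := by
  obtain ⟨t, rfl⟩ := h
  rw [List.getD_append _ _ _ _ hi]

lemma psi_eq_getD (x : ℝ) {i n : ℕ} (hin : i < n) :
    psi q x i = (F q x n).1.getD i false := by
  show (F q x (i + 1)).1.getD i false = _
  rw [IsPrefix.getD_eq (F_prefix x (show i + 1 ≤ n from hin))
    (by rw [(F_snd (q := q) x (i + 1)).2]; omega)]

include hq hS

lemma F_mem_Ico {x : ℝ} (hx : x ∈ Set.Ico (0:ℝ) 1) (n : ℕ) :
    x ∈ Set.Ico (lo q (F q x n).1) (lo q (F q x n).1 + w q (F q x n).1) := by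
  induction n with
  | zero => simpa [F_zero, lo_nil, w_nil (q := q)] using hx
  | succ n ih =>
    have hsnd := (F_snd (q := q) x n).1
    rw [F_succ, step]
    split_ifs with h
    · refine ⟨by rw [lo_append_false]; exact ih.1, ?_⟩
      show x < lo q ((F q x n).1 ++ [false]) + w q ((F q x n).1 ++ [false])
      rw [lo_append_false]
      rw [hsnd] at h
      exact h
    · constructor
      · show lo q ((F q x n).1 ++ [true]) ≤ x
        rw [lo_append_true, ← hsnd]
        exact not_lt.1 h
      · show x < lo q ((F q x n).1 ++ [true]) + w q ((F q x n).1 ++ [true])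
        rw [lo_append_true]
        have h2 := ih.2
        rw [w_add hq hS (F q x n).1] at h2
        linarith

lemma interval_subset (u : List Bool) (b : Bool) :
    Set.Ico (lo q (u ++ [b])) (lo q (u ++ [b]) + w q (u ++ [b])) ⊆
      Set.Ico (lo q u) (lo q u + w q u) := by
  apply Set.Ico_subset_Ico
  · cases b
    · rw [lo_append_false]
    · rw [lo_append_true]
      linarith [w_nonneg (q := q) (u ++ [false])]
  · cases b
    · rw [lo_append_false, w_add hq hS u]
      linarith [w_nonneg (q := q) (u ++ [true])]
    · rw [lo_append_true, w_add hq hS u]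
      linarith

lemma frame (u : List Bool) :
    Set.Ico (lo q u) (lo q u + w q u) ⊆ Set.Ico (0:ℝ) 1 := by
  induction u using List.reverseRecOn with
  | nil => rw [lo_nil, w_nil (q := q), zero_add]
  | append_singleton u b ih => exact (interval_subset hq hS u b).trans ih

lemma F_unique : ∀ (u : List Bool), ∀ x ∈ Set.Ico (lo q u) (lo q u + w q u),
    F q x u.length = (u, lo q u) := by
  intro u
  induction u using List.reverseRecOn with
  | nil =>
    intro x _
    rw [show ([] : List Bool).length = 0 from rfl, F_zero, lo_nil]
  | append_singleton u b ih =>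
    intro x hx
    have hx' := interval_subset hq hS u b hx
    have hFu := ih x hx'
    rw [show (u ++ [b]).length = u.length + 1 from by simp, F_succ, hFu, step]
    cases b
    · rw [if_pos]
      · rw [lo_append_false]
      · show x < lo q u + w q (u ++ [false])
        have := hx.2
        rwa [lo_append_false] at this
    · rw [if_neg]
      · rw [lo_append_true]
      · show ¬ x < lo q u + w q (u ++ [false])
        have := hx.1
        rw [lo_append_true] at this
        exact not_lt.2 this

lemma F_fst_eq_iff {x : ℝ} (hx : x ∈ Set.Ico (0:ℝ) 1) (u : List Bool) :
    (F q x u.length).1 = u ↔ x ∈ Set.Ico (lo q u) (lo q u + w q u) := by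
  constructor
  · intro h
    have hmem := F_mem_Ico hq hS hx u.length
    rwa [h] at hmem
  · intro h
    rw [F_unique hq hS u x h]

omit hq hS

lemma psi_mem_cylRev_iff {x : ℝ} (u : List Bool) :
    psi q x ∈ cylRev u ↔ (F q x u.length).1 = u := by
  constructor
  · intro h
    apply List.ext_getElem ((F_snd (q := q) x u.length).2.trans rfl)
    intro i h1 h2
    have hgd : (F q x u.length).1.getD i false = u.getD i false := by
      rw [← psi_eq_getD x (show i < u.length from h2)]
      exact h i h2
    rwa [List.getD_eq_getElem _ _ h1, List.getD_eq_getElem _ _ h2] at hgd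
  · intro h i hi
    rw [psi_eq_getD x hi, h]

include hq hS

lemma psi_preimage_cylRev (u : List Bool) :
    psi q ⁻¹' cylRev u ∩ Set.Ico (0:ℝ) 1 = Set.Ico (lo q u) (lo q u + w q u) := by
  ext x
  constructor
  · rintro ⟨hmem, hx⟩
    exact (F_fst_eq_iff hq hS hx u).1 ((psi_mem_cylRev_iff u).1 hmem)
  · intro h
    have hx : x ∈ Set.Ico (0:ℝ) 1 := frame hq hS u h
    exact ⟨(psi_mem_cylRev_iff u).2 ((F_fst_eq_iff hq hS hx u).2 h), hx⟩

omit hq hS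

lemma measurableSet_Fset (n : ℕ) (u : List Bool) :
    MeasurableSet {x : ℝ | (F q x n).1 = u} := by
  induction n generalizing u with
  | zero =>
    by_cases h : u = []
    · subst h
      convert MeasurableSet.univ
      ext x
      simp [F_zero]
    · convert MeasurableSet.empty
      ext x
      simp only [Set.mem_setOf_eq, Set.mem_empty_iff_false, iff_false]
      rw [F_zero]
      exact fun hh => h hh.symm
  | succ n ih =>
    rcases List.eq_nil_or_concat' u with rfl | ⟨v, b, rfl⟩
    · convert MeasurableSet.empty
      ext x
      simp only [Set.mem_setOf_eq, Set.mem_empty_iff_false, iff_false]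
      intro h
      have hl := (F_snd (q := q) x (n + 1)).2
      rw [h] at hl
      simp at hl
    · cases b
      · have key : {x : ℝ | (F q x (n + 1)).1 = v ++ [false]} =
            {x : ℝ | (F q x n).1 = v} ∩ Set.Iio (lo q v + w q (v ++ [false])) := by
          ext x
          have hsnd := (F_snd (q := q) x n).1
          simp only [Set.mem_setOf_eq, Set.mem_inter_iff, Set.mem_Iio]
          constructor
          · intro h
            rw [F_succ, step] at h
            split_ifs at h with hc
            · obtain ⟨hv, -⟩ :=
                List.append_inj' (h : (F q x n).1 ++ [false] = v ++ [false]) rfl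
              rw [hsnd, hv] at hc
              exact ⟨hv, hc⟩
            · obtain ⟨-, hb⟩ :=
                List.append_inj' (h : (F q x n).1 ++ [true] = v ++ [false]) rfl
              exact absurd hb (by simp)
          · rintro ⟨h1, h2⟩
            rw [F_succ, step, if_pos (show x < (F q x n).2 + w q ((F q x n).1 ++ [false]) by
              rw [hsnd, h1]; exact h2)]
            rw [h1]
        rw [key]
        exact (ih v).inter measurableSet_Iio
      · have key : {x : ℝ | (F q x (n + 1)).1 = v ++ [true]} =
            {x : ℝ | (F q x n).1 = v} ∩ (Set.Iio (lo q v + w q (v ++ [false])))ᶜ := by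
          ext x
          have hsnd := (F_snd (q := q) x n).1
          simp only [Set.mem_setOf_eq, Set.mem_inter_iff, Set.mem_compl_iff, Set.mem_Iio]
          constructor
          · intro h
            rw [F_succ, step] at h
            split_ifs at h with hc
            · obtain ⟨-, hb⟩ :=
                List.append_inj' (h : (F q x n).1 ++ [false] = v ++ [true]) rfl
              exact absurd hb (by simp)
            · obtain ⟨hv, -⟩ :=
                List.append_inj' (h : (F q x n).1 ++ [true] = v ++ [true]) rfl
              rw [hsnd, hv] at hc
              exact ⟨hv, hc⟩
          · rintro ⟨h1, h2⟩
            rw [F_succ, step, if_neg (show ¬ x < (F q x n).2 + w q ((F q x n).1 ++ [false]) by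
              rw [hsnd, h1]; exact h2)]
            rw [h1]
        rw [key]
        exact (ih v).inter measurableSet_Iio.compl

lemma measurable_psi : Measurable (psi q) := by
  rw [show psi q = fun x => psi q x from rfl]
  apply measurable_pi_iff.mpr
  intro i
  apply measurable_to_countable
  intro y
  have huniv : ∀ b : Bool, (fun x => psi q x i) ⁻¹' {b} =
      ⋃ u ∈ {u : List Bool | u.getD i false = b}, {x : ℝ | (F q x (i + 1)).1 = u} := by
    intro b
    ext x
    simp only [Set.mem_preimage, Set.mem_singleton_iff, Set.mem_iUnion, Set.mem_setOf_eq,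
      exists_prop]
    constructor
    · intro h
      exact ⟨(F q x (i + 1)).1, h, rfl⟩
    · rintro ⟨u, hu, hF⟩
      show (F q x (i + 1)).1.getD i false = b
      rw [hF, hu]
  rw [huniv (psi q y i)]
  exact MeasurableSet.biUnion (Set.to_countable _) (fun u _ => measurableSet_Fset (i + 1) u)

variable (q) in
noncomputable def pim : Measure L := (volume.restrict (Set.Ico (0:ℝ) 1)).map (psi q)

include hq hS in
lemma pim_cylRev (u : List Bool) : pim q (cylRev u) = W q u := by
  rw [pim, Measure.map_apply measurable_psi (measurableSet_cylRev u),
    Measure.restrict_apply (measurable_psi (measurableSet_cylRev u)),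
    psi_preimage_cylRev hq hS u, Real.volume_Ico, add_sub_cancel_left, w,
    ENNReal.ofReal_toReal (W_ne_top hq hS u)]

lemma isProbability_pim : IsProbabilityMeasure (pim q) := by
  constructor
  rw [pim, Measure.map_apply measurable_psi MeasurableSet.univ, Set.preimage_univ,
    Measure.restrict_apply MeasurableSet.univ, Set.univ_inter, Real.volume_Ico]
  norm_num

include hq hS in
lemma pim_zeroSeq : pim q {zeroSeq} = 0 := by
  have hA : ∀ n, pim q (A n) = combC q n * (T q 0)⁻¹ := fun n =>
    (pim_cylRev hq hS (pw n)).trans (W_pw n)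
  have hsum : pim q (⋃ n, A n) = 1 := by
    rw [measure_iUnion disjoint_A measurableSet_A]
    rw [tsum_congr hA, ENNReal.tsum_mul_right, ← T_zero,
      ENNReal.mul_inv_cancel (S_ne_zero (q := q)) hS]
  have huniv : pim q Set.univ = 1 := by
    have := isProbability_pim (q := q)
    exact measure_univ
  have hdisj : Disjoint ({zeroSeq} : Set L) (⋃ n, A n) := by
    rw [Set.disjoint_left]
    rintro s rfl hs
    rw [Set.mem_iUnion] at hs
    obtain ⟨n, hn⟩ := hs
    exact zeroSeq_notMem_A n hn
  have hcover := union_A_cover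
  have : pim q {zeroSeq} + 1 = 0 + 1 := by
    rw [zero_add, ← hsum, ← measure_union hdisj (MeasurableSet.iUnion measurableSet_A),
      hcover, huniv, hsum]
  exact (ENNReal.add_left_inj ENNReal.one_ne_top).1 this

end Construction

/-- (Infinite comb, irreducible case, existence.)
If `q_{0^∞}(0) ≠ 1`, the VLMC defined by a probabilized infinite comb admits a
stationary probability measure on `L` if and only if the series `∑ cₙ`
converges. -/
theorem comb_exists_stationary_iff
    (q : ℕ → Bool → ℝ≥0∞) (qinf : Bool → ℝ≥0∞)
    (hq : ∀ n, q n false + q n true = 1) (hqinf : qinf false + qinf true = 1)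
    (hirr : qinf false ≠ 1)
    (κ : Kernel L L) [IsMarkovKernel κ] (hκ : IsCombKernel q qinf κ) :
    (∃ π : Measure L, IsProbabilityMeasure π ∧ IsStationary κ π) ↔
      (∑' n, combC q n) ≠ ∞ := by
  constructor
  · rintro ⟨π, hπ, hstat⟩
    intro hStop
    have hz0 : π {zeroSeq} = 0 := by
      have h1 : π {zeroSeq} = π {zeroSeq} * qinf false := by
        conv_lhs => rw [hstat {zeroSeq} measurableSet_zeroSeq]
        rw [lintegral_kernel_zeroSeq hκ]
      by_contra hz
      have hne : π {zeroSeq} ≠ ∞ := measure_ne_top π _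
      have heq : qinf false = 1 := by
        have h2 : qinf false = (π {zeroSeq})⁻¹ * (π {zeroSeq} * qinf false) := by
          rw [← mul_assoc, ENNReal.inv_mul_cancel hz hne, one_mul]
        rw [h2, ← h1, ENNReal.inv_mul_cancel hz hne]
      exact hirr heq
    have hrec : ∀ n, π (A (n + 1)) = q n false * π (A n) := by
      intro n
      have hA1 : A (n + 1) = cylRev (false :: pw n) := by rw [A, pw_succ]
      have h1 : π (A (n + 1)) = ∑' k, q k false * π (cylRev (pw n) ∩ A k) := by
        rw [hA1, hstat _ (measurableSet_cylRev _), lintegral_kernel_cylRev_cons hκ π hz0]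
      rw [h1, tsum_eq_single n (fun k hk => by
        rw [cylRev_inter_A_of_mem (true_mem_pw n), leadFalse_pw, if_neg hk,
          measure_empty, mul_zero]),
        cylRev_inter_A_of_mem (true_mem_pw n), leadFalse_pw, if_pos rfl]
      rfl
    have hgeom : ∀ n, π (A n) = combC q n * π (A 0) := by
      intro n
      induction n with
      | zero => rw [combC_zero, one_mul]
      | succ n ih => rw [hrec n, ih, combC_succ]; ring
    have hdisj : Disjoint ({zeroSeq} : Set L) (⋃ n, A n) := by
      rw [Set.disjoint_left]
      rintro s rfl hs
      rw [Set.mem_iUnion] at hs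
      obtain ⟨n, hn⟩ := hs
      exact zeroSeq_notMem_A n hn
    have htot : (∑' n, combC q n) * π (A 0) = 1 := by
      have huniv : π Set.univ = 1 := measure_univ
      rw [← union_A_cover, measure_union hdisj (MeasurableSet.iUnion measurableSet_A),
        hz0, zero_add, measure_iUnion disjoint_A measurableSet_A, tsum_congr hgeom,
        ENNReal.tsum_mul_right] at huniv
      exact huniv
    rw [hStop] at htot
    rcases eq_or_ne (π (A 0)) 0 with h0 | h0
    · rw [h0, mul_zero] at htot
      exact zero_ne_one htot
    · rw [ENNReal.top_mul h0] at htot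
      exact ENNReal.top_ne_one htot
  · intro hS'
    have hS : T q 0 ≠ ∞ := by rw [T_zero]; exact hS'
    haveI hprob : IsProbabilityMeasure (pim q) := isProbability_pim
    refine ⟨pim q, hprob, ?_⟩
    have hbind : IsProbabilityMeasure ((pim q).bind κ) := by
      constructor
      rw [Measure.bind_apply MeasurableSet.univ (ProbabilityTheory.Kernel.measurable κ).aemeasurable]
      have hone : ∀ s : L, κ s Set.univ = 1 := fun s => measure_univ
      simp only [hone, lintegral_one]
      exact measure_univ
    have hkey : pim q = (pim q).bind κ := by
      refine ext_of_generate_finite Ccyl generateFrom_Ccyl isPiSystem_Ccyl ?_ ?_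
      · rintro _ ⟨u, rfl⟩
        rw [Measure.bind_apply (measurableSet_cylRev u) (ProbabilityTheory.Kernel.measurable κ).aemeasurable]
        cases u with
        | nil =>
          rw [cylRev_nil]
          have hone : ∀ s : L, κ s Set.univ = 1 := fun s => measure_univ
          simp only [hone, lintegral_one, measure_univ]
        | cons a v =>
          rw [lintegral_kernel_cylRev_cons hκ _ (pim_zeroSeq hq hS),
            tsum_kernel_cyl hq hS (pim q) (fun u => pim_cylRev hq hS u),
            pim_cylRev hq hS]
      · rw [measure_univ, measure_univ]
    intro B hB
    rw [show (pim q) B = ((pim q).bind κ) B from by rw [← hkey]]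
    exact Measure.bind_apply hB (ProbabilityTheory.Kernel.measurable κ).aemeasurable


end VLMC
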